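/- Let λ1 ≥ λ2 ≥ λ3 > 0 with σ1 = λ1+λ2+λ3 and f = λ1λ2λ3/σ1. If σ1² ≥ f/2 (which holds whenever λ2 ≥ √(f/3)), then for F^{22} = f(1/λ2−1/σ1) and F^{33} = f(1/λ3−1/σ1): 2F^{33}/λ1² ≥ f²/(σ1⁴F^{22}). -/

import Mathlib

theorem caseB_u331_coefficient (l1 l2 l3 σ1 f F22 F33 : ℝ)
    (h12 : l1 ≥ l2) (h23 : l2 ≥ l3) (h3 : l3 > 0)
    (hσ1 : σ1 = l1 + l2 + l3) (hf : f = l1 * l2 * l3 / σ1)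
    (hσ1sq : σ1 ^ 2 ≥ f / 2)
    (hF22 : F22 = f * (1 / l2 - 1 / σ1)) (hF33 : F33 = f * (1 / l3 - 1 / σ1)) :
    2 * F33 / l1 ^ 2 ≥ f ^ 2 / (σ1 ^ 4 * F22) := by
  have hl2 : l2 > 0 := lt_of_lt_of_le h3 h23
  have hl1 : l1 > 0 := lt_of_lt_of_le hl2 h12
  have hσ : σ1 > 0 := by rw [hσ1]; positivity
  have hfpos : f > 0 := by rw [hf]; positivity
  have hF22p : F22 > 0 := by
    rw [hF22]
    apply mul_pos hfpos
    have : 1 / σ1 < 1 / l2 := by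
      apply one_div_lt_one_div_of_lt hl2
      rw [hσ1]; linarith
    linarith
  have hF33p : F33 > 0 := by
    rw [hF33]
    apply mul_pos hfpos
    have : 1 / σ1 < 1 / l3 := by
      apply one_div_lt_one_div_of_lt h3
      rw [hσ1]; linarith
    linarith
  rw [ge_iff_le, div_le_div_iff₀ (by positivity) (by positivity)]
  have hkey : f ^ 2 * l1 ^ 2 ≤ 2 * F33 * (σ1 ^ 4 * F22) := by
    rw [hF22, hF33, hf]
    have hl2' : l2 ≠ 0 := ne_of_gt hl2
    have hl3' : l3 ≠ 0 := ne_of_gt h3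
    have hσ' : σ1 ≠ 0 := ne_of_gt hσ
    field_simp
    have hk : 2 * σ1 ^ 2 * ((σ1 - l2) * (σ1 - l3)) ≥ l1 ^ 2 * (l2 * l3) := by
      rw [hσ1]
      nlinarith [mul_pos hl1 hl2, mul_pos hl2 h3, mul_pos hl1 h3,
        mul_pos (mul_pos hl1 hl2) h3, sq_nonneg (l2 - l3), sq_nonneg (l1 - l2),
        mul_pos (mul_pos hl1 hl1) h3, mul_pos (mul_pos hl1 hl1) hl2]
    have hmul := mul_le_mul_of_nonneg_left hk
      (show (0:ℝ) ≤ l1 ^ 2 * l2 ^ 2 * l3 ^ 2 * σ1 ^ 4 by positivity)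
    nlinarith [hmul]
  linarith
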